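/- Let D = {z ∈ ℂ : |z| < 1} be the open unit disk. Let φ : D → ℝ be a bounded continuous function with φ ≥ 0 on D, satisfying the sub-mean value property: φ(z) ≤ (1/2π)∫₀^{2π} φ(z + re^{iθ}) dθ whenever the closed disk of center z and radius r is contained in D. Suppose that for almost every θ ∈ [0,2π) (with respect to Lebesgue measure), φ(z_n) → 0 for every sequence (z_n) in D with z_n → e^{iθ} and |e^{iθ} − z_n|/(1 − |z_n|) → 1. Then φ ≡ 0 on D. -/

import Mathlib

open MeasureTheory Metric Complex Filter

/-- The average of `u` over the circle of center `z` and radius `r`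
(with respect to the uniform probability measure on the circle). -/
noncomputable def circleAvg (u : ℂ → ℝ) (z : ℂ) (r : ℝ) : ℝ :=
  (2 * Real.pi)⁻¹ * ∫ θ in (0:ℝ)..(2 * Real.pi), u (z + r * Complex.exp (θ * Complex.I))

/-- The open unit disk in `ℂ`. -/
def unitDisk : Set ℂ := Metric.ball 0 1

namespace VanishAux

noncomputable def ec (θ : ℝ) : ℂ := Complex.exp (θ * Complex.I)

lemma abs_ec (θ : ℝ) : ‖ec θ‖ = 1 := Complex.norm_exp_ofReal_mul_I θ

lemma ec_periodic : Function.Periodic ec (2 * Real.pi) := by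
  intro θ
  simp only [ec]
  push_cast
  rw [add_mul, Complex.exp_add, Complex.exp_two_pi_mul_I, mul_one]

lemma ec_add (a b : ℝ) : ec (a + b) = ec a * ec b := by
  simp only [ec]; push_cast; rw [add_mul, Complex.exp_add]

lemma ec_zero : ec 0 = 1 := by simp [ec]

lemma isOpen_unitDisk : IsOpen unitDisk := isOpen_ball

lemma mem_unitDisk {w : ℂ} : w ∈ unitDisk ↔ ‖w‖ < 1 := by
  simp [unitDisk, Complex.dist_eq]

lemma circleAvg_zero_eq (φ : ℂ → ℝ) (t : ℝ) :
    circleAvg φ 0 t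
      = (2 * Real.pi)⁻¹ * ∫ θ in (0:ℝ)..(2 * Real.pi), φ (t * ec θ) := by
  simp [circleAvg, ec]

section

variable {φ : ℂ → ℝ} {M : ℝ}

lemma cont_circ (hcont : ContinuousOn φ unitDisk) {z : ℂ} {r t : ℝ}
    (h : ∀ θ : ℝ, z + r * ec θ ∈ unitDisk) :
    Continuous fun θ : ℝ => φ (z + r * ec θ) := by
  apply (hcont.mono (subset_refl _)).comp_continuous
  · exact continuous_const.add (continuous_const.mul (by
      exact Complex.continuous_exp.comp ((Complex.continuous_ofReal).mul continuous_const)))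
  · exact h

lemma mem_disk_mul {t : ℝ} (ht : |t| < 1) (θ : ℝ) : (t : ℂ) * ec θ ∈ unitDisk := by
  rw [mem_unitDisk, norm_mul, abs_ec, mul_one, Complex.norm_real, Real.norm_eq_abs]; exact ht

lemma cont_circ0 (hcont : ContinuousOn φ unitDisk) {t : ℝ} (ht : |t| < 1) :
    Continuous fun θ : ℝ => φ (t * ec θ) := by
  have := cont_circ (z := 0) (r := t) (t := 0) hcont (fun θ => by
    simpa using mem_disk_mul ht θ)
  simpa using this

lemma A_nonneg (hnonneg : ∀ z ∈ unitDisk, 0 ≤ φ z) {t : ℝ} (ht : |t| < 1) :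
    0 ≤ circleAvg φ 0 t := by
  rw [circleAvg_zero_eq]
  apply mul_nonneg (by positivity)
  apply intervalIntegral.integral_nonneg Real.two_pi_pos.le
  intro u _
  exact hnonneg _ (mem_disk_mul ht u)

lemma A_le_M (hbd : ∀ z ∈ unitDisk, |φ z| ≤ M) (hcont : ContinuousOn φ unitDisk)
    {t : ℝ} (ht : |t| < 1) : circleAvg φ 0 t ≤ M := by
  rw [circleAvg_zero_eq]
  have h1 : (∫ θ in (0:ℝ)..(2 * Real.pi), φ (t * ec θ)) ≤ ∫ _ in (0:ℝ)..(2 * Real.pi), M := by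
    apply intervalIntegral.integral_mono_on Real.two_pi_pos.le
      ((cont_circ0 hcont ht).intervalIntegrable _ _) (intervalIntegrable_const)
    intro u _
    exact (abs_le.mp (hbd _ (mem_disk_mul ht u))).2
  rw [intervalIntegral.integral_const, smul_eq_mul, sub_zero] at h1
  calc (2 * Real.pi)⁻¹ * ∫ θ in (0:ℝ)..(2 * Real.pi), φ (t * ec θ)
      ≤ (2 * Real.pi)⁻¹ * (2 * Real.pi * M) := by
        apply mul_le_mul_of_nonneg_left h1 (by positivity)
    _ = M := by field_simp

end

/-- a continuous nonneg function with nonpositive integral over `[0,2π]` vanishes there -/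
lemma eq_zero_of_nonneg_of_integral_nonpos {f : ℝ → ℝ} (hf : Continuous f)
    (h0 : ∀ x, 0 ≤ f x) (hint : (∫ x in (0:ℝ)..(2 * Real.pi), f x) ≤ 0) :
    ∀ x ∈ Set.Icc (0:ℝ) (2 * Real.pi), f x = 0 := by
  by_contra hcon
  push_neg at hcon
  obtain ⟨x₀, hx₀, hne⟩ := hcon
  have hc : 0 < f x₀ := lt_of_le_of_ne (h0 x₀) (Ne.symm hne)
  obtain ⟨δ, δpos, hδ⟩ := Metric.continuousAt_iff.mp hf.continuousAt (f x₀ / 2) (half_pos hc)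
  set u := max (x₀ - δ / 2) 0 with hu
  set v := min (x₀ + δ / 2) (2 * Real.pi) with hv
  have huv : u < v := by
    have h1 : x₀ - δ / 2 < v := lt_min (by linarith) (by have := hx₀.2; linarith)
    have h2 : (0:ℝ) < v := lt_min (by have := hx₀.1; linarith) Real.two_pi_pos
    exact max_lt h1 h2
  have hlow : ∀ x ∈ Set.Icc u v, f x₀ / 2 ≤ f x := by
    intro x hx
    have h1 : dist x x₀ < δ := by
      rw [Real.dist_eq, abs_sub_lt_iff]
      have hxu : x₀ - δ / 2 ≤ x := le_trans (le_max_left _ _) hx.1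
      have hxv : x ≤ x₀ + δ / 2 := le_trans hx.2 (min_le_left _ _)
      constructor <;> linarith
    have := hδ h1
    rw [Real.dist_eq, abs_sub_lt_iff] at this
    linarith [this.1, this.2]
  have hi1 : (0:ℝ) ≤ ∫ x in (0:ℝ)..u, f x :=
    intervalIntegral.integral_nonneg (le_max_right _ _) (fun x _ => h0 x)
  have hi3 : (0:ℝ) ≤ ∫ x in v..(2 * Real.pi), f x :=
    intervalIntegral.integral_nonneg (min_le_right _ _) (fun x _ => h0 x)
  have hi2 : (v - u) * (f x₀ / 2) ≤ ∫ x in u..v, f x := by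
    have := intervalIntegral.integral_mono_on (μ := volume) huv.le intervalIntegrable_const
      (hf.intervalIntegrable _ _) hlow
    rwa [intervalIntegral.integral_const, smul_eq_mul] at this
  have hsplit : (∫ x in (0:ℝ)..(2 * Real.pi), f x)
      = (∫ x in (0:ℝ)..u, f x) + (∫ x in u..v, f x) + ∫ x in v..(2 * Real.pi), f x := by
    rw [intervalIntegral.integral_add_adjacent_intervals (hf.intervalIntegrable _ _)
      (hf.intervalIntegrable _ _),
      intervalIntegral.integral_add_adjacent_intervals (hf.intervalIntegrable _ _)
      (hf.intervalIntegrable _ _)]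
  nlinarith [mul_pos (sub_pos.mpr huv) (half_pos hc)]

section
variable {φ : ℂ → ℝ} {M : ℝ}

lemma contA (hbd : ∀ z ∈ unitDisk, |φ z| ≤ M) (hcont : ContinuousOn φ unitDisk)
    {t₀ : ℝ} (h0 : 0 ≤ t₀) (h1 : t₀ < 1) :
    ContinuousAt (fun t => circleAvg φ 0 t) t₀ := by
  simp only [circleAvg_zero_eq]
  apply ContinuousAt.mul continuousAt_const
  apply intervalIntegral.continuousAt_of_dominated_interval (bound := fun _ => M)
  · filter_upwards [Ioo_mem_nhds (by linarith : (-1:ℝ) < t₀) h1] with t ht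
    have habs : |t| < 1 := abs_lt.mpr ⟨ht.1, ht.2⟩
    apply Continuous.aestronglyMeasurable
    have hin : Continuous fun θ : ℝ => (t:ℂ) * ec θ :=
      continuous_const.mul (Complex.continuous_exp.comp
        (Complex.continuous_ofReal.mul continuous_const))
    exact hcont.comp_continuous hin (mem_disk_mul habs)
  · filter_upwards [Ioo_mem_nhds (by linarith : (-1:ℝ) < t₀) h1] with t ht
    apply Eventually.of_forall
    intro θ _
    rw [Real.norm_eq_abs]
    exact hbd _ (mem_disk_mul (abs_lt.mpr ⟨ht.1, ht.2⟩) θ)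
  · exact intervalIntegrable_const
  · apply Eventually.of_forall
    intro θ _
    have hm : (t₀ : ℂ) * ec θ ∈ unitDisk := mem_disk_mul (abs_lt.mpr ⟨by linarith, h1⟩) θ
    have hin : Continuous fun t : ℝ => (t:ℂ) * ec θ :=
      Complex.continuous_ofReal.mul continuous_const
    exact ContinuousAt.comp (g := φ) (f := fun t : ℝ => (t:ℂ) * ec θ) (x := t₀)
      (hcont.continuousAt (isOpen_unitDisk.mem_nhds hm)) hin.continuousAt

end

lemma circleMap_eq (ρ r γ : ℝ) : circleMap (ρ:ℂ) r γ = (ρ:ℂ) + r * ec γ := by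
  simp [circleMap, ec]

lemma re_pos_of_mem {ρ r : ℝ} (hr : 0 < r) (hrρ : r < ρ) {z : ℂ}
    (hz : z ∈ Metric.closedBall (ρ:ℂ) r) : 0 < z.re := by
  rw [mem_closedBall, Complex.dist_eq] at hz
  have h2 : |(z - (ρ:ℂ)).re| ≤ r := le_trans (Complex.abs_re_le_norm _) hz
  rw [Complex.sub_re, Complex.ofReal_re, abs_le] at h2
  linarith [h2.1]

lemma logMVP {ρ r : ℝ} (hr : 0 < r) (hrρ : r < ρ) :
    (2 * Real.pi)⁻¹ * (∫ γ in (0:ℝ)..(2 * Real.pi), Real.log (‖(ρ:ℂ) + r * ec γ‖))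
      = Real.log ρ := by
  have hρ : (0:ℝ) < ρ := hr.trans hrρ
  have hmem : ∀ γ : ℝ, circleMap (ρ:ℂ) r γ ∈ slitPlane := by
    intro γ
    apply Or.inl
    apply re_pos_of_mem hr hrρ
    rw [mem_closedBall, Complex.dist_eq, circleMap_sub_center]
    simp [circleMap, abs_ec, abs_of_pos hr, ec]
  have hdiff : DifferentiableOn ℂ Complex.log (Metric.closedBall (ρ:ℂ) r) := by
    intro z hz
    exact (Complex.differentiableAt_log (Or.inl (re_pos_of_mem hr hrρ hz))).differentiableWithinAt
  have key := hdiff.circleIntegral_sub_inv_smul (w := (ρ:ℂ)) (Metric.mem_ball_self hr)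
  rw [circleIntegral] at key
  have hrw : ∀ γ : ℝ, (deriv (circleMap (ρ:ℂ) r) γ) •
      ((circleMap (ρ:ℂ) r γ - (ρ:ℂ))⁻¹ • Complex.log (circleMap (ρ:ℂ) r γ))
      = I * Complex.log (circleMap (ρ:ℂ) r γ) := by
    intro γ
    rw [deriv_circleMap, circleMap_sub_center, smul_smul]
    have hne : circleMap 0 r γ ≠ 0 := by
      simp only [circleMap_zero]
      apply mul_ne_zero (by exact_mod_cast hr.ne') (Complex.exp_ne_zero _)
    rw [smul_eq_mul]
    congr 1
    field_simp
  simp only [hrw] at key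
  rw [intervalIntegral.integral_const_mul] at key
  have key2 : (∫ γ in (0:ℝ)..(2 * Real.pi), Complex.log (circleMap (ρ:ℂ) r γ))
      = 2 * Real.pi * Complex.log (ρ:ℂ) := by
    apply mul_left_cancel₀ Complex.I_ne_zero
    rw [key, smul_eq_mul]
    ring
  have hg : Continuous fun γ : ℝ => Complex.log (circleMap (ρ:ℂ) r γ) := by
    rw [continuous_iff_continuousAt]
    intro γ
    exact (continuousAt_clog (hmem γ)).comp (continuous_circleMap _ _).continuousAt
  have key3 : (∫ γ in (0:ℝ)..(2 * Real.pi), Real.log (‖circleMap (ρ:ℂ) r γ‖))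
      = 2 * Real.pi * Real.log ρ := by
    have := Complex.reCLM.intervalIntegral_comp_comm (hg.intervalIntegrable (μ := volume) 0 (2 * Real.pi))
    simp only [Complex.reCLM_apply, Complex.log_re] at this
    rw [this, key2, ← Complex.ofReal_log hρ.le]
    have : (2 * Real.pi * (Real.log ρ : ℂ)) = ((2 * Real.pi * Real.log ρ : ℝ) : ℂ) := by
      push_cast; ring
    rw [this, Complex.ofReal_re]
  simp only [circleMap_eq] at key3
  rw [key3]
  field_simp


section Main
variable {φ : ℂ → ℝ} {M : ℝ}

lemma submean (hbd : ∀ z ∈ unitDisk, |φ z| ≤ M) (hcont : ContinuousOn φ unitDisk)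
    (hsub : ∀ z : ℂ, ∀ r : ℝ, 0 < r → Metric.closedBall z r ⊆ unitDisk →
      φ z ≤ circleAvg φ z r)
    {ρ r : ℝ} (hr : 0 < r) (hrρ : r < ρ) (h1 : ρ + r < 1) :
    circleAvg φ 0 ρ ≤ (2 * Real.pi)⁻¹ *
      ∫ γ in (0:ℝ)..(2 * Real.pi), circleAvg φ 0 (‖(ρ:ℂ) + r * ec γ‖) := by
  have hρ : (0:ℝ) < ρ := hr.trans hrρ
  have hρ1 : ρ < 1 := by linarith
  have habsle : ∀ γ : ℝ, ‖(ρ:ℂ) + r * ec γ‖ ≤ ρ + r := by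
    intro γ
    calc ‖(ρ:ℂ) + r * ec γ‖
        ≤ ‖(ρ:ℂ)‖ + ‖(r:ℂ) * ec γ‖ := norm_add_le _ _
      _ = ρ + r := by
          rw [norm_mul, abs_ec, mul_one, Complex.norm_real, Real.norm_eq_abs, Complex.norm_real, Real.norm_eq_abs,
            abs_of_pos hρ, abs_of_pos hr]
  have hmemc : ∀ α γ : ℝ, (ρ:ℂ) * ec α + r * ec γ ∈ unitDisk := by
    intro α γ
    rw [mem_unitDisk]
    calc ‖(ρ:ℂ) * ec α + r * ec γ‖
        ≤ ‖(ρ:ℂ) * ec α‖ + ‖(r:ℂ) * ec γ‖ := norm_add_le _ _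
      _ = ρ + r := by
          rw [norm_mul, norm_mul, abs_ec, abs_ec, mul_one, mul_one, Complex.norm_real, Real.norm_eq_abs,
            Complex.norm_real, Real.norm_eq_abs, abs_of_pos hρ, abs_of_pos hr]
      _ < 1 := h1
  have hmem2 : ∀ α γ : ℝ, ec α * ((ρ:ℂ) + r * ec γ) ∈ unitDisk := by
    intro α γ
    rw [mem_unitDisk, norm_mul, abs_ec, one_mul]
    exact lt_of_le_of_lt (habsle γ) h1
  -- step 1 : pointwise sub-mean inequality on circles around ρ ec α
  have step1 : ∀ α : ℝ, φ ((ρ:ℂ) * ec α)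
      ≤ (2 * Real.pi)⁻¹ * ∫ γ in (0:ℝ)..(2 * Real.pi), φ ((ρ:ℂ) * ec α + r * ec γ) := by
    intro α
    have hss : Metric.closedBall ((ρ:ℂ) * ec α) r ⊆ unitDisk := by
      intro w hw
      rw [mem_closedBall, Complex.dist_eq] at hw
      rw [mem_unitDisk]
      calc ‖w‖ = ‖(w - (ρ:ℂ) * ec α) + (ρ:ℂ) * ec α‖ := by ring_nf
        _ ≤ ‖w - (ρ:ℂ) * ec α‖ + ‖(ρ:ℂ) * ec α‖ :=
            norm_add_le _ _
        _ ≤ r + ρ := by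
            rw [norm_mul, abs_ec, mul_one, Complex.norm_real, Real.norm_eq_abs, abs_of_pos hρ]
            exact add_le_add_left hw _
        _ < 1 := by linarith
    have := hsub ((ρ:ℂ) * ec α) r hr hss
    simpa [circleAvg, ec] using this
  -- continuity of the inner average as a function of α
  have hGcont : Continuous fun α : ℝ =>
      ∫ γ in (0:ℝ)..(2 * Real.pi), φ ((ρ:ℂ) * ec α + r * ec γ) := by
    apply intervalIntegral.continuous_of_dominated_interval (bound := fun _ => M)
    · intro α
      apply Continuous.aestronglyMeasurable
      have hin : Continuous fun γ : ℝ => (ρ:ℂ) * ec α + r * ec γ :=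
        continuous_const.add (continuous_const.mul (Complex.continuous_exp.comp
          (Complex.continuous_ofReal.mul continuous_const)))
      exact hcont.comp_continuous hin (fun γ => hmemc α γ)
    · intro α
      apply Eventually.of_forall
      intro γ _
      rw [Real.norm_eq_abs]
      exact hbd _ (hmemc α γ)
    · exact intervalIntegrable_const
    · apply Eventually.of_forall
      intro γ _
      have hin : Continuous fun α : ℝ => (ρ:ℂ) * ec α + r * ec γ :=
        (continuous_const.mul (Complex.continuous_exp.comp
          (Complex.continuous_ofReal.mul continuous_const))).add continuous_const
      exact hcont.comp_continuous hin (fun α => hmemc α γ)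
  -- step 2 : integrate the pointwise inequality in α
  have step2 : circleAvg φ 0 ρ ≤ (2 * Real.pi)⁻¹ * ∫ α in (0:ℝ)..(2 * Real.pi),
      (2 * Real.pi)⁻¹ * ∫ γ in (0:ℝ)..(2 * Real.pi), φ ((ρ:ℂ) * ec α + r * ec γ) := by
    rw [circleAvg_zero_eq]
    apply mul_le_mul_of_nonneg_left _ (by positivity)
    apply intervalIntegral.integral_mono_on (μ := volume) Real.two_pi_pos.le
    · exact (cont_circ0 hcont (by rw [abs_of_pos hρ]; exact hρ1)).intervalIntegrable _ _
    · exact (continuous_const.mul hGcont).intervalIntegrable _ _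
    · intro α _
      exact step1 α
  -- step 3 : rotate the inner integral
  have step3 : ∀ α : ℝ, (∫ γ in (0:ℝ)..(2 * Real.pi), φ ((ρ:ℂ) * ec α + r * ec γ))
      = ∫ γ in (0:ℝ)..(2 * Real.pi), φ (ec α * ((ρ:ℂ) + r * ec γ)) := by
    intro α
    have hper : Function.Periodic (fun γ : ℝ => φ ((ρ:ℂ) * ec α + r * ec γ)) (2 * Real.pi) := by
      intro x
      simp only [ec_periodic x]
    have h1' : (∫ γ in (0:ℝ)..(2 * Real.pi), φ ((ρ:ℂ) * ec α + r * ec γ))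
        = ∫ γ in α..(α + 2 * Real.pi), φ ((ρ:ℂ) * ec α + r * ec γ) := by
      have := hper.intervalIntegral_add_eq α 0
      rw [zero_add] at this
      exact this.symm
    have h2' : (∫ γ in (0:ℝ)..(2 * Real.pi), φ ((ρ:ℂ) * ec α + r * ec (γ + α)))
        = ∫ γ in α..(α + 2 * Real.pi), φ ((ρ:ℂ) * ec α + r * ec γ) := by
      have := intervalIntegral.integral_comp_add_right
        (a := (0:ℝ)) (b := 2 * Real.pi) (fun γ => φ ((ρ:ℂ) * ec α + r * ec γ)) α
      rw [zero_add, add_comm (2 * Real.pi) α] at this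
      exact this
    rw [h1', ← h2']
    apply intervalIntegral.integral_congr
    intro γ _
    show φ ((ρ:ℂ) * ec α + r * ec (γ + α)) = φ (ec α * ((ρ:ℂ) + r * ec γ))
    rw [ec_add]
    ring_nf
  -- step 4 : swap the two integrals
  have hfin : IsFiniteMeasure (volume.restrict (Set.Ioc (0:ℝ) (2 * Real.pi))) := by
    constructor
    rw [Measure.restrict_apply_univ]
    simp [Real.volume_Ioc]
    exact ENNReal.mul_lt_top (by norm_num) ENNReal.ofReal_lt_top
  have hcont2 : Continuous fun p : ℝ × ℝ => φ (ec p.1 * ((ρ:ℂ) + r * ec p.2)) := by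
    have hin : Continuous fun p : ℝ × ℝ => ec p.1 * ((ρ:ℂ) + r * ec p.2) := by
      apply Continuous.mul
      · exact Complex.continuous_exp.comp
          ((Complex.continuous_ofReal.comp continuous_fst).mul continuous_const)
      · exact continuous_const.add (continuous_const.mul (Complex.continuous_exp.comp
          ((Complex.continuous_ofReal.comp continuous_snd).mul continuous_const)))
    exact hcont.comp_continuous hin (fun p => hmem2 p.1 p.2)
  have step4 : (∫ α in (0:ℝ)..(2 * Real.pi), ∫ γ in (0:ℝ)..(2 * Real.pi),
        φ (ec α * ((ρ:ℂ) + r * ec γ)))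
      = ∫ γ in (0:ℝ)..(2 * Real.pi), ∫ α in (0:ℝ)..(2 * Real.pi),
        φ (ec α * ((ρ:ℂ) + r * ec γ)) := by
    simp only [intervalIntegral.integral_of_le Real.two_pi_pos.le]
    apply MeasureTheory.integral_integral_swap
    constructor
    · exact (hcont2.aestronglyMeasurable)
    · apply MeasureTheory.HasFiniteIntegral.of_bounded (C := M)
      apply Eventually.of_forall
      intro p
      rw [Real.norm_eq_abs]
      exact hbd _ (hmem2 p.1 p.2)
  -- step 5 : each α-integral is a circle average
  have step5 : ∀ γ : ℝ, (∫ α in (0:ℝ)..(2 * Real.pi), φ (ec α * ((ρ:ℂ) + r * ec γ)))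
      = 2 * Real.pi * circleAvg φ 0 (‖(ρ:ℂ) + r * ec γ‖) := by
    intro γ
    set w : ℂ := (ρ:ℂ) + r * ec γ with hw_def
    set t : ℝ := ‖w‖ with ht_def
    have hw : (t:ℂ) * ec (Complex.arg w) = w := Complex.norm_mul_exp_arg_mul_I w
    have hstep : ∀ α : ℝ, ec α * w = (t:ℂ) * ec (α + Complex.arg w) := by
      intro α
      conv_lhs => rw [← hw]
      rw [ec_add]
      ring
    simp only [hstep]
    set σ := Complex.arg w
    have hper : Function.Periodic (fun α : ℝ => φ ((t:ℂ) * ec α)) (2 * Real.pi) := by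
      intro x
      simp only [ec_periodic x]
    have h2' : (∫ α in (0:ℝ)..(2 * Real.pi), φ ((t:ℂ) * ec (α + σ)))
        = ∫ α in σ..(σ + 2 * Real.pi), φ ((t:ℂ) * ec α) := by
      have := intervalIntegral.integral_comp_add_right
        (a := (0:ℝ)) (b := 2 * Real.pi) (fun α => φ ((t:ℂ) * ec α)) σ
      rw [zero_add, add_comm (2 * Real.pi) σ] at this
      exact this
    rw [h2']
    have h3' := hper.intervalIntegral_add_eq σ 0
    rw [zero_add] at h3'
    rw [h3', circleAvg_zero_eq]
    field_simp
  -- assemble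
  calc circleAvg φ 0 ρ
      ≤ (2 * Real.pi)⁻¹ * ∫ α in (0:ℝ)..(2 * Real.pi),
          (2 * Real.pi)⁻¹ * ∫ γ in (0:ℝ)..(2 * Real.pi), φ ((ρ:ℂ) * ec α + r * ec γ) := step2
    _ = (2 * Real.pi)⁻¹ * ((2 * Real.pi)⁻¹ * ∫ α in (0:ℝ)..(2 * Real.pi),
          ∫ γ in (0:ℝ)..(2 * Real.pi), φ (ec α * ((ρ:ℂ) + r * ec γ))) := by
        simp only [step3]
        rw [intervalIntegral.integral_const_mul]
    _ = (2 * Real.pi)⁻¹ * ((2 * Real.pi)⁻¹ * ∫ γ in (0:ℝ)..(2 * Real.pi),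
          2 * Real.pi * circleAvg φ 0 (‖(ρ:ℂ) + r * ec γ‖)) := by
        rw [step4]
        congr 1
        congr 1
        apply intervalIntegral.integral_congr
        intro γ _
        exact step5 γ
    _ = (2 * Real.pi)⁻¹ *
          ∫ γ in (0:ℝ)..(2 * Real.pi), circleAvg φ 0 (‖(ρ:ℂ) + r * ec γ‖) := by
        rw [intervalIntegral.integral_const_mul]
        have hpi : (2 * Real.pi) ≠ 0 := (Real.two_pi_pos).ne'
        field_simp
end Main

section Small
variable {φ : ℂ → ℝ} {M : ℝ}

lemma exists_smallA (hbd : ∀ z ∈ unitDisk, |φ z| ≤ M) (hcont : ContinuousOn φ unitDisk)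
    (hlim : ∀ᵐ (θ : ℝ) ∂((volume : Measure ℝ).restrict (Set.Ico 0 (2 * Real.pi))),
      ∀ z : ℕ → ℂ, (∀ n, z n ∈ unitDisk) →
        Tendsto z atTop (nhds (Complex.exp (θ * Complex.I))) →
        Tendsto (fun n => ‖Complex.exp (θ * Complex.I) - z n‖ /
          (1 - ‖z n‖)) atTop (nhds 1) →
        Tendsto (fun n => φ (z n)) atTop (nhds 0))
    {ε a : ℝ} (hε : 0 < ε) (ha0 : 0 ≤ a) (ha1 : a < 1) :
    ∃ t, a < t ∧ t < 1 ∧ circleAvg φ 0 t < ε := by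
  by_contra hcon
  push_neg at hcon
  set s : ℕ → ℝ := fun n => 1 - (1 - a) / (n + 2) with hs_def
  have hs0 : ∀ n, a < s n := by
    intro n
    have h2 : (1:ℝ) < (n:ℝ) + 2 := by
      have : (0:ℝ) ≤ (n:ℝ) := Nat.cast_nonneg n
      linarith
    have := div_lt_self (by linarith : (0:ℝ) < 1 - a) h2
    simp only [hs_def]
    linarith
  have hs1 : ∀ n, s n < 1 := by
    intro n
    have : (0:ℝ) < (1 - a) / (n + 2) := by
      apply div_pos (by linarith) (by positivity)
    simp only [hs_def]; linarith
  have hstend : Tendsto s atTop (nhds 1) := by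
    have h2 : Tendsto (fun n : ℕ => ((n:ℝ) + 2)) atTop atTop :=
      tendsto_atTop_add_const_right _ 2 tendsto_natCast_atTop_atTop
    have h3 : Tendsto (fun n : ℕ => (1 - a) / ((n:ℝ) + 2)) atTop (nhds 0) :=
      Tendsto.div_atTop tendsto_const_nhds h2
    have h4 : Tendsto (fun n : ℕ => 1 - (1 - a) / ((n:ℝ) + 2)) atTop (nhds (1 - 0)) :=
      tendsto_const_nhds.sub h3
    simpa using h4
  -- a.e. convergence of the integrands
  have h1 := (ae_restrict_iff' measurableSet_Ico).mp hlim
  have h2 : ∀ᵐ θ : ℝ ∂volume, θ ≠ 2 * Real.pi := by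
    rw [ae_iff]
    have : {θ : ℝ | ¬θ ≠ 2 * Real.pi} = {2 * Real.pi} := by ext x; simp
    rw [this]
    exact measure_singleton _
  have hae : ∀ᵐ θ : ℝ ∂volume, θ ∈ Set.uIoc (0:ℝ) (2 * Real.pi) →
      Tendsto (fun n => φ (((s n : ℝ) : ℂ) * ec θ)) atTop (nhds 0) := by
    filter_upwards [h1, h2] with θ hP hne hmem
    rw [Set.uIoc_of_le Real.two_pi_pos.le] at hmem
    have hmem' : θ ∈ Set.Ico 0 (2 * Real.pi) :=
      ⟨hmem.1.le, lt_of_le_of_ne hmem.2 hne⟩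
    have hsnonneg : ∀ n, 0 ≤ s n := fun n => le_trans ha0 (hs0 n).le
    have habs : ∀ n, |s n| < 1 := fun n => by
      rw [_root_.abs_of_nonneg (hsnonneg n)]; exact hs1 n
    apply hP hmem' (fun n => ((s n : ℝ) : ℂ) * ec θ) (fun n => mem_disk_mul (habs n) θ)
    · have hc : Tendsto (fun n => ((s n : ℝ) : ℂ)) atTop (nhds 1) := by
        have := (Complex.continuous_ofReal.tendsto 1).comp hstend
        simpa [Function.comp_def] using this
      have := hc.mul_const (ec θ)
      rw [one_mul] at this
      exact this
    · have heq : ∀ n, ‖Complex.exp (θ * Complex.I) - ((s n : ℝ) : ℂ) * ec θ‖ /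
          (1 - ‖((s n : ℝ) : ℂ) * ec θ‖) = 1 := by
        intro n
        have e1 : Complex.exp (θ * Complex.I) - ((s n : ℝ) : ℂ) * ec θ
            = (((1 - s n : ℝ)) : ℂ) * ec θ := by
          show ec θ - ((s n : ℝ) : ℂ) * ec θ = _
          push_cast
          ring
        have e2 : ‖((s n : ℝ) : ℂ) * ec θ‖ = s n := by
          rw [norm_mul, abs_ec, mul_one, Complex.norm_real, Real.norm_eq_abs, _root_.abs_of_nonneg (hsnonneg n)]
        rw [e1, e2, norm_mul, abs_ec, mul_one, Complex.norm_real, Real.norm_eq_abs,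
          _root_.abs_of_nonneg (by linarith [hs1 n] : (0:ℝ) ≤ 1 - s n)]
        exact div_self (by linarith [hs1 n])
      rw [show (fun n => ‖Complex.exp (θ * Complex.I) - ((s n : ℝ) : ℂ) * ec θ‖ /
          (1 - ‖((s n : ℝ) : ℂ) * ec θ‖)) = fun _ => (1:ℝ) from funext heq]
      exact tendsto_const_nhds
  have hDCT : Tendsto (fun n => ∫ θ in (0:ℝ)..(2 * Real.pi), φ (((s n : ℝ) : ℂ) * ec θ))
      atTop (nhds (∫ θ in (0:ℝ)..(2 * Real.pi), (0:ℝ))) := by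
    apply intervalIntegral.tendsto_integral_filter_of_dominated_convergence
      (bound := fun _ => M)
    · apply Eventually.of_forall
      intro n
      exact (cont_circ0 hcont (by
        rw [_root_.abs_of_nonneg (le_trans ha0 (hs0 n).le)]; exact hs1 n)).aestronglyMeasurable
    · apply Eventually.of_forall
      intro n
      apply Eventually.of_forall
      intro θ _
      rw [Real.norm_eq_abs]
      exact hbd _ (mem_disk_mul (by
        rw [_root_.abs_of_nonneg (le_trans ha0 (hs0 n).le)]; exact hs1 n) θ)
    · exact intervalIntegrable_const
    · exact hae
  rw [intervalIntegral.integral_const, smul_zero] at hDCT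
  have hA : Tendsto (fun n => circleAvg φ 0 (s n)) atTop (nhds 0) := by
    simp only [circleAvg_zero_eq]
    have := hDCT.const_mul (2 * Real.pi)⁻¹
    simpa using this
  have hge : (0:ℝ) ≥ ε :=
    ge_of_tendsto hA (Eventually.of_forall fun n => hcon (s n) (hs0 n) (hs1 n))
  linarith
end Small

section Compare
variable {φ : ℂ → ℝ} {M : ℝ}

lemma compare (hbd : ∀ z ∈ unitDisk, |φ z| ≤ M) (hcont : ContinuousOn φ unitDisk)
    (hsub : ∀ z : ℂ, ∀ r : ℝ, 0 < r → Metric.closedBall z r ⊆ unitDisk →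
      φ z ≤ circleAvg φ z r)
    {a b ρ₁ ρ₂ : ℝ} (h1 : 0 < ρ₁) (h12 : ρ₁ < ρ₂) (h2 : ρ₂ < 1)
    (hψ1 : circleAvg φ 0 ρ₁ ≤ a + b * Real.log ρ₁)
    (hψ2 : circleAvg φ 0 ρ₂ ≤ a + b * Real.log ρ₂) :
    ∀ ρ ∈ Set.Icc ρ₁ ρ₂, circleAvg φ 0 ρ ≤ a + b * Real.log ρ := by
  set ψ : ℝ → ℝ := fun t => circleAvg φ 0 t - a - b * Real.log t with hψdef
  have hψcontAt : ∀ t ∈ Set.Icc ρ₁ ρ₂, ContinuousAt ψ t := by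
    intro t ht
    have h0t : 0 < t := lt_of_lt_of_le h1 ht.1
    have hA : ContinuousAt (fun u => circleAvg φ 0 u) t :=
      contA hbd hcont h0t.le (lt_of_le_of_lt ht.2 h2)
    exact (hA.sub continuousAt_const).sub
      (continuousAt_const.mul (Real.continuousAt_log h0t.ne'))
  have hψcont : ContinuousOn ψ (Set.Icc ρ₁ ρ₂) :=
    fun t ht => (hψcontAt t ht).continuousWithinAt
  obtain ⟨x, hxmem, hxmax'⟩ := isCompact_Icc.exists_isMaxOn
    (Set.nonempty_Icc.mpr h12.le) hψcont
  have hxmax : ∀ y ∈ Set.Icc ρ₁ ρ₂, ψ y ≤ ψ x := isMaxOn_iff.mp hxmax'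
  set m := ψ x with hmdef
  suffices hm0 : m ≤ 0 by
    intro ρ hρ
    have := hxmax ρ hρ
    simp only [hψdef] at this
    simp only [hmdef] at hm0
    linarith
  by_contra hpos
  push_neg at hpos
  have hψρ₁ : ψ ρ₁ ≤ 0 := by simp only [hψdef]; linarith
  have hψρ₂ : ψ ρ₂ ≤ 0 := by simp only [hψdef]; linarith
  set S := {t | t ∈ Set.Icc ρ₁ ρ₂ ∧ ψ t = m} with hSdef
  have hSne : S.Nonempty := ⟨x, hxmem, rfl⟩
  have hSbdd : BddAbove S := ⟨ρ₂, fun t ht => ht.1.2⟩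
  have hSclosed : IsClosed S := by
    have : S = Set.Icc ρ₁ ρ₂ ∩ ψ ⁻¹' {m} := by
      ext t; simp [hSdef, Set.mem_inter_iff]
    rw [this]
    exact hψcont.preimage_isClosed_of_isClosed isClosed_Icc isClosed_singleton
  set x₀ := sSup S with hx₀def
  have hx₀S : x₀ ∈ S := hSclosed.csSup_mem hSne hSbdd
  have hx₀mem : x₀ ∈ Set.Icc ρ₁ ρ₂ := hx₀S.1
  have hx₀m : ψ x₀ = m := hx₀S.2
  have hx1 : ρ₁ < x₀ := by
    rcases lt_or_eq_of_le hx₀mem.1 with h | h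
    · exact h
    · exfalso; rw [← h] at hx₀m; linarith
  have hx2 : x₀ < ρ₂ := by
    rcases lt_or_eq_of_le hx₀mem.2 with h | h
    · exact h
    · exfalso; rw [h] at hx₀m; linarith [hψρ₂]
  set r := min (x₀ - ρ₁) (ρ₂ - x₀) / 2 with hrdef
  have hrpos : 0 < r := by
    apply div_pos (lt_min (by linarith) (by linarith)) two_pos
  have hr1 : r < x₀ - ρ₁ := by
    have := min_le_left (x₀ - ρ₁) (ρ₂ - x₀)
    simp only [hrdef]; linarith
  have hr2 : r < ρ₂ - x₀ := by
    have := min_le_right (x₀ - ρ₁) (ρ₂ - x₀)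
    simp only [hrdef]; linarith
  have hrx : r < x₀ := by linarith
  have hsum : x₀ + r < 1 := by linarith
  have hx₀pos : 0 < x₀ := lt_trans h1 hx1
  -- bounds on |x₀ + r e^{iγ}|
  have hwub : ∀ γ : ℝ, ‖(x₀:ℂ) + r * ec γ‖ ≤ x₀ + r := by
    intro γ
    calc ‖(x₀:ℂ) + r * ec γ‖
        ≤ ‖(x₀:ℂ)‖ + ‖(r:ℂ) * ec γ‖ := norm_add_le _ _
      _ = x₀ + r := by
          rw [norm_mul, abs_ec, mul_one, Complex.norm_real, Real.norm_eq_abs, Complex.norm_real, Real.norm_eq_abs,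
            _root_.abs_of_pos hx₀pos, _root_.abs_of_pos hrpos]
  have hwlb : ∀ γ : ℝ, x₀ - r ≤ ‖(x₀:ℂ) + r * ec γ‖ := by
    intro γ
    have e1 : ‖(x₀:ℂ)‖
        ≤ ‖(x₀:ℂ) + r * ec γ‖ + ‖(r:ℂ) * ec γ‖ := by
      calc ‖(x₀:ℂ)‖
          = ‖((x₀:ℂ) + r * ec γ) + (-((r:ℂ) * ec γ))‖ := by ring_nf
        _ ≤ ‖(x₀:ℂ) + r * ec γ‖ + ‖-((r:ℂ) * ec γ)‖ :=
            norm_add_le _ _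
        _ = ‖(x₀:ℂ) + r * ec γ‖ + ‖(r:ℂ) * ec γ‖ := by
            rw [norm_neg]
    rw [Complex.norm_real, Real.norm_eq_abs, _root_.abs_of_pos hx₀pos, norm_mul, abs_ec, mul_one,
      Complex.norm_real, Real.norm_eq_abs, _root_.abs_of_pos hrpos] at e1
    linarith
  have hwmem : ∀ γ : ℝ, ‖(x₀:ℂ) + r * ec γ‖ ∈ Set.Icc ρ₁ ρ₂ := by
    intro γ
    exact ⟨by linarith [hwlb γ], by linarith [hwub γ]⟩
  -- sub-mean and log MVP
  have hsm := submean hbd hcont hsub hrpos hrx hsum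
  have hlog := logMVP hrpos hrx
  -- continuity of integrands in γ
  have hwcont : Continuous fun γ : ℝ => ‖(x₀:ℂ) + r * ec γ‖ := by
    apply continuous_norm.comp
    exact continuous_const.add (continuous_const.mul (Complex.continuous_exp.comp
      (Complex.continuous_ofReal.mul continuous_const)))
  have hAcomp : Continuous fun γ : ℝ => circleAvg φ 0 (‖(x₀:ℂ) + r * ec γ‖) := by
    rw [continuous_iff_continuousAt]
    intro γ
    exact ContinuousAt.comp (g := fun t : ℝ => circleAvg φ 0 t)
      (f := fun γ : ℝ => ‖(x₀:ℂ) + r * ec γ‖) (x := γ)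
      (contA hbd hcont (norm_nonneg _) (lt_of_le_of_lt (hwmem γ).2 h2))
      hwcont.continuousAt
  have hlogcomp : Continuous fun γ : ℝ => Real.log (‖(x₀:ℂ) + r * ec γ‖) := by
    rw [continuous_iff_continuousAt]
    intro γ
    exact ContinuousAt.comp (g := Real.log)
      (f := fun γ : ℝ => ‖(x₀:ℂ) + r * ec γ‖) (x := γ)
      (Real.continuousAt_log (show (0:ℝ) < ‖(x₀:ℂ) + r * ec γ‖ by linarith [hwlb γ]).ne') hwcont.continuousAt
  -- the averaged inequality for ψ
  have hint : (∫ γ in (0:ℝ)..(2 * Real.pi), ψ (‖(x₀:ℂ) + r * ec γ‖))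
      = (∫ γ in (0:ℝ)..(2 * Real.pi), circleAvg φ 0 (‖(x₀:ℂ) + r * ec γ‖))
        - 2 * Real.pi * a
        - b * ∫ γ in (0:ℝ)..(2 * Real.pi), Real.log (‖(x₀:ℂ) + r * ec γ‖) := by
    simp only [hψdef]
    rw [intervalIntegral.integral_sub
      (f := fun γ => circleAvg φ 0 ‖(x₀:ℂ) + r * ec γ‖ - a)
      (g := fun γ => b * Real.log ‖(x₀:ℂ) + r * ec γ‖)
      ((hAcomp.sub continuous_const).intervalIntegrable _ _)
      ((continuous_const.mul hlogcomp).intervalIntegrable _ _),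
      intervalIntegral.integral_sub (hAcomp.intervalIntegrable _ _) intervalIntegrable_const,
      intervalIntegral.integral_const, intervalIntegral.integral_const_mul]
    simp only [smul_eq_mul, sub_zero]
  have hψineq : m ≤ (2 * Real.pi)⁻¹ *
      ∫ γ in (0:ℝ)..(2 * Real.pi), ψ (‖(x₀:ℂ) + r * ec γ‖) := by
    rw [hint]
    have hπ : (0:ℝ) < 2 * Real.pi := Real.two_pi_pos
    have e1 : (2 * Real.pi)⁻¹ *
        ((∫ γ in (0:ℝ)..(2 * Real.pi), circleAvg φ 0 (‖(x₀:ℂ) + r * ec γ‖))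
          - 2 * Real.pi * a
          - b * ∫ γ in (0:ℝ)..(2 * Real.pi), Real.log (‖(x₀:ℂ) + r * ec γ‖))
        = (2 * Real.pi)⁻¹ *
            (∫ γ in (0:ℝ)..(2 * Real.pi), circleAvg φ 0 (‖(x₀:ℂ) + r * ec γ‖))
          - a - b * ((2 * Real.pi)⁻¹ *
            ∫ γ in (0:ℝ)..(2 * Real.pi), Real.log (‖(x₀:ℂ) + r * ec γ‖)) := by
      field_simp
    rw [e1, hlog]
    have : ψ x₀ = circleAvg φ 0 x₀ - a - b * Real.log x₀ := rfl
    rw [← hx₀m, this]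
    linarith [hsm]
  -- contradiction via the vanishing lemma
  set f : ℝ → ℝ := fun γ => m - ψ (‖(x₀:ℂ) + r * ec γ‖) with hfdef
  have hfc : Continuous f := by
    apply continuous_const.sub
    exact (hAcomp.sub continuous_const).sub (continuous_const.mul hlogcomp)
  have hfnonneg : ∀ γ, 0 ≤ f γ := fun γ => sub_nonneg.mpr (hxmax _ (hwmem γ))
  have hfint : (∫ γ in (0:ℝ)..(2 * Real.pi), f γ) ≤ 0 := by
    have hψint : IntervalIntegrable (fun γ => ψ (‖(x₀:ℂ) + r * ec γ‖))
        volume 0 (2 * Real.pi) :=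
      ((hAcomp.sub continuous_const).sub (continuous_const.mul hlogcomp)).intervalIntegrable _ _
    have e2 : (∫ γ in (0:ℝ)..(2 * Real.pi), f γ)
        = 2 * Real.pi * m
          - ∫ γ in (0:ℝ)..(2 * Real.pi), ψ (‖(x₀:ℂ) + r * ec γ‖) := by
      simp only [hfdef]
      rw [intervalIntegral.integral_sub intervalIntegrable_const hψint,
        intervalIntegral.integral_const]
      simp only [smul_eq_mul, sub_zero]
    rw [e2]
    have hπ : (0:ℝ) < 2 * Real.pi := Real.two_pi_pos
    have := mul_le_mul_of_nonneg_left hψineq hπ.le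
    rw [← mul_assoc, mul_inv_cancel₀ hπ.ne', one_mul] at this
    linarith
  have hzero := eq_zero_of_nonneg_of_integral_nonpos hfc hfnonneg hfint
  have hγ0 : f 0 = 0 := hzero 0 ⟨le_refl 0, Real.two_pi_pos.le⟩
  have hw0 : ‖(x₀:ℂ) + r * ec 0‖ = x₀ + r := by
    rw [ec_zero, mul_one, ← Complex.ofReal_add, Complex.norm_real, Real.norm_eq_abs,
      _root_.abs_of_pos (by linarith)]
  have hmemS : x₀ + r ∈ S := by
    refine ⟨⟨by linarith, by linarith⟩, ?_⟩
    simp only [hfdef, hw0] at hγ0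
    linarith
  have : x₀ + r ≤ x₀ := le_csSup hSbdd hmemS
  linarith
end Compare

section Zero
variable {φ : ℂ → ℝ} {M : ℝ}

lemma A_eq_zero (hbd : ∀ z ∈ unitDisk, |φ z| ≤ M) (hcont : ContinuousOn φ unitDisk)
    (hnonneg : ∀ z ∈ unitDisk, 0 ≤ φ z)
    (hsub : ∀ z : ℂ, ∀ r : ℝ, 0 < r → Metric.closedBall z r ⊆ unitDisk →
      φ z ≤ circleAvg φ z r)
    (hlim : ∀ᵐ (θ : ℝ) ∂((volume : Measure ℝ).restrict (Set.Ico 0 (2 * Real.pi))),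
      ∀ z : ℕ → ℂ, (∀ n, z n ∈ unitDisk) →
        Tendsto z atTop (nhds (Complex.exp (θ * Complex.I))) →
        Tendsto (fun n => ‖Complex.exp (θ * Complex.I) - z n‖ /
          (1 - ‖z n‖)) atTop (nhds 1) →
        Tendsto (fun n => φ (z n)) atTop (nhds 0))
    {ρ : ℝ} (hρ0 : 0 < ρ) (hρ1 : ρ < 1) : circleAvg φ 0 ρ = 0 := by
  have hM0 : 0 ≤ M := le_trans (abs_nonneg _)
    (hbd 0 (by rw [mem_unitDisk]; simp))
  refine le_antisymm ?_ (A_nonneg hnonneg (by rw [_root_.abs_of_pos hρ0]; exact hρ1))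
  by_contra hpos0
  push_neg at hpos0
  set ε := circleAvg φ 0 ρ with hεdef
  obtain ⟨ρ₂, hρ₂a, hρ₂1, hρ₂small⟩ :=
    exists_smallA hbd hcont hlim (half_pos hpos0) hρ0.le hρ1
  set K := Real.log ρ₂ - Real.log ρ with hKdef
  have hK0 : 0 < K := by
    simp only [hKdef]
    linarith [Real.log_lt_log hρ0 hρ₂a]
  set ρ₁ := min (ρ / 2) (Real.exp (Real.log ρ₂ - (2 * M * K / ε + 1))) with hρ₁def
  have hρ₁pos : 0 < ρ₁ := lt_min (by linarith) (Real.exp_pos _)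
  have hρ₁ρ : ρ₁ < ρ := lt_of_le_of_lt (min_le_left _ _) (by linarith)
  have hlog₁ : Real.log ρ₁ ≤ Real.log ρ₂ - (2 * M * K / ε + 1) := by
    calc Real.log ρ₁ ≤ Real.log (Real.exp (Real.log ρ₂ - (2 * M * K / ε + 1))) :=
          Real.log_le_log hρ₁pos (min_le_right _ _)
      _ = Real.log ρ₂ - (2 * M * K / ε + 1) := Real.log_exp _
  set D := Real.log ρ₂ - Real.log ρ₁ with hDdef
  have hMK : 0 ≤ 2 * M * K / ε := by positivity
  have hD1 : 2 * M * K / ε + 1 ≤ D := by simp only [hDdef]; linarith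
  have hDpos : 0 < D := by linarith
  set b := (circleAvg φ 0 ρ₂ - M) / D with hbdef
  set a := M - b * Real.log ρ₁ with hadef
  have hψ1 : circleAvg φ 0 ρ₁ ≤ a + b * Real.log ρ₁ := by
    have he : a + b * Real.log ρ₁ = M := by simp only [hadef]; ring
    rw [he]
    exact A_le_M hbd hcont (by rw [_root_.abs_of_pos hρ₁pos]; linarith)
  have hbD : b * D = circleAvg φ 0 ρ₂ - M := by
    simp only [hbdef]
    field_simp
  have hψ2 : circleAvg φ 0 ρ₂ ≤ a + b * Real.log ρ₂ := by
    have he : a + b * Real.log ρ₂ = M + b * D := by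
      simp only [hadef, hDdef]; ring
    rw [he, hbD]
    linarith
  have hcomp := compare hbd hcont hsub hρ₁pos (lt_trans hρ₁ρ hρ₂a) hρ₂1 hψ1 hψ2
    ρ ⟨hρ₁ρ.le, hρ₂a.le⟩
  -- estimate a + b * log ρ
  set u := Real.log ρ - Real.log ρ₁ with hudef
  have hu0 : 0 ≤ u := by
    simp only [hudef]
    linarith [Real.log_lt_log hρ₁pos hρ₁ρ]
  have huD : u = D - K := by simp only [hudef, hDdef, hKdef]; ring
  have huD1 : u / D ≤ 1 := by
    rw [div_le_one hDpos]
    simp only [huD]; linarith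
  have hval : a + b * Real.log ρ
      = M * K / D + circleAvg φ 0 ρ₂ * (u / D) := by
    have : Real.log ρ = Real.log ρ₁ + u := by simp only [hudef]; ring
    rw [this]
    simp only [hadef, hbdef, huD, hKdef, hDdef]
    have hD0 : Real.log ρ₂ - Real.log ρ₁ ≠ 0 := hDpos.ne'
    field_simp
    ring
  have hA2 : 0 ≤ circleAvg φ 0 ρ₂ := by
    apply A_nonneg hnonneg
    rw [_root_.abs_of_pos (lt_trans hρ₁pos (lt_trans hρ₁ρ hρ₂a))]
    exact hρ₂1
  have hterm2 : circleAvg φ 0 ρ₂ * (u / D) ≤ circleAvg φ 0 ρ₂ := by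
    calc circleAvg φ 0 ρ₂ * (u / D) ≤ circleAvg φ 0 ρ₂ * 1 :=
        mul_le_mul_of_nonneg_left huD1 hA2
      _ = circleAvg φ 0 ρ₂ := mul_one _
  have hterm1 : M * K / D < ε / 2 := by
    rw [div_lt_iff₀ hDpos]
    have h1 : ε / 2 * D ≥ ε / 2 * (2 * M * K / ε + 1) :=
      mul_le_mul_of_nonneg_left hD1 (by linarith)
    have h2 : ε / 2 * (2 * M * K / ε + 1) = M * K + ε / 2 := by
      field_simp
    nlinarith
  have : ε ≤ a + b * Real.log ρ := hcomp
  rw [hval] at this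
  linarith
end Zero

end VanishAux

open VanishAux in
/-- vanishing case of the `L^∞` maximum principle for the unit
disk: a nonnegative bounded continuous function on `D` with the sub-mean
value property whose normal boundary limits vanish a.e. (i.e. `φ(z_n) → 0`
for every sequence `z_n → e^{iθ}` with `|e^{iθ}-z_n|/(1-|z_n|) → 1`, for a.e.
`θ`) is identically zero. -/
theorem vanishing_normal_limits_disk (φ : ℂ → ℝ)
    (hbd : ∃ M : ℝ, ∀ z ∈ unitDisk, |φ z| ≤ M)
    (hcont : ContinuousOn φ unitDisk)
    (hnonneg : ∀ z ∈ unitDisk, 0 ≤ φ z)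
    (hsub : ∀ z : ℂ, ∀ r : ℝ, 0 < r → Metric.closedBall z r ⊆ unitDisk →
      φ z ≤ circleAvg φ z r)
    (hlim : ∀ᵐ (θ : ℝ) ∂((volume : Measure ℝ).restrict (Set.Ico 0 (2 * Real.pi))),
      ∀ z : ℕ → ℂ, (∀ n, z n ∈ unitDisk) →
        Tendsto z atTop (nhds (Complex.exp (θ * Complex.I))) →
        Tendsto (fun n => ‖Complex.exp (θ * Complex.I) - z n‖ /
          (1 - ‖z n‖)) atTop (nhds 1) →
        Tendsto (fun n => φ (z n)) atTop (nhds 0)) :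
    ∀ z ∈ unitDisk, φ z = 0 := by
  obtain ⟨M, hbd⟩ := hbd
  intro z hz
  by_cases hz0 : z = 0
  · subst hz0
    have hA : circleAvg φ 0 (1/2) = 0 :=
      A_eq_zero hbd hcont hnonneg hsub hlim (by norm_num) (by norm_num)
    have hle := hsub 0 (1/2) (by norm_num)
      (closedBall_subset_ball (by norm_num))
    rw [hA] at hle
    exact le_antisymm hle (hnonneg 0 hz)
  · set ρ := ‖z‖ with hρdef
    have hρ0 : 0 < ρ := by
      simp only [hρdef]
      exact norm_pos_iff.mpr hz0
    have hρ1 : ρ < 1 := mem_unitDisk.mp hz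
    have hA : circleAvg φ 0 ρ = 0 :=
      A_eq_zero hbd hcont hnonneg hsub hlim hρ0 hρ1
    have hfc : Continuous fun θ : ℝ => φ ((ρ:ℂ) * ec θ) :=
      cont_circ0 hcont (by rw [_root_.abs_of_pos hρ0]; exact hρ1)
    have hint0 : (∫ θ in (0:ℝ)..(2 * Real.pi), φ ((ρ:ℂ) * ec θ)) ≤ 0 := by
      rw [circleAvg_zero_eq] at hA
      rcases mul_eq_zero.mp hA with h | h
      · exfalso
        exact (inv_ne_zero Real.two_pi_pos.ne') h
      · rw [h]
    have hzero := eq_zero_of_nonneg_of_integral_nonpos hfc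
      (fun θ => hnonneg _ (mem_disk_mul (by rw [_root_.abs_of_pos hρ0]; exact hρ1) θ)) hint0
    have hzval : ((ρ:ℝ) : ℂ) * ec (Complex.arg z) = z := Complex.norm_mul_exp_arg_mul_I z
    rcases le_or_gt 0 (Complex.arg z) with h | h
    · have hmem : Complex.arg z ∈ Set.Icc (0:ℝ) (2 * Real.pi) :=
        ⟨h, by linarith [Complex.arg_le_pi z, Real.pi_pos]⟩
      have := hzero _ hmem
      rwa [hzval] at this
    · have hmem : Complex.arg z + 2 * Real.pi ∈ Set.Icc (0:ℝ) (2 * Real.pi) :=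
        ⟨by linarith [Complex.neg_pi_lt_arg z, Real.pi_pos], by linarith⟩
      have h2 := hzero _ hmem
      rw [ec_periodic (Complex.arg z), hzval] at h2
      exact h2
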